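/- Let a = (a_n)_{n≥0} be a non-ultimately periodic sequence over F_q and set ξ := Σ_{n=0}^{∞} a_n T^{−n} ∈ F_q((T^{-1})). Assume there exist integers n_0 ≥ 1 and κ ≥ 2 such that p(a, n) ≤ κn for all n ≥ n_0. If the Diophantine exponent Dio(a) is finite, then w_1(ξ) ≤ 8(κ+1)²(2κ+1)·Dio(a) − 1. -/

import Mathlib

open Polynomial Filter
open scoped ENNReal

noncomputable section

namespace Ooto

variable (Fq : Type) [Field Fq] [Fintype Fq]

/-- `F_q((T⁻¹))`, realized as formal Laurent series in the variable `X = T⁻¹`. -/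
abbrev K := LaurentSeries Fq

/-- The element `T = X⁻¹` of `F_q((T⁻¹))`. -/
def TT : K Fq := HahnSeries.single (-1 : ℤ) (1 : Fq)

/-- The natural embedding of `F_q[T]` into `F_q((T⁻¹))`, sending `T` to `T`. -/
def polyToK : Polynomial Fq →+* K Fq := Polynomial.eval₂RingHom HahnSeries.C (TT Fq)

open Classical in
/-- The absolute value on `F_q((T⁻¹))`: `|0| = 0` and `|ξ| = q^{-N}` where `N` is the order
of `ξ` as a series in `T⁻¹`. -/
def kabs (f : K Fq) : ℝ := if f = 0 then 0 else (Fintype.card Fq : ℝ) ^ (-f.order)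

/-- A fixed algebraic closure of `F_q((T⁻¹))`. -/
abbrev L := AlgebraicClosure (K Fq)

def toL : K Fq →+* L Fq := algebraMap (K Fq) (L Fq)

def φ : Polynomial Fq →+* L Fq := (toL Fq).comp (polyToK Fq)

/-- Evaluation of `P ∈ (F_q[T])[X]` at `ξ ∈ F_q((T⁻¹))`. -/
def evalK (P : Polynomial (Polynomial Fq)) (ξ : K Fq) : K Fq :=
  Polynomial.eval₂ (polyToK Fq) ξ P

/-- Evaluation of `P ∈ (F_q[T])[X]` at a point of the algebraic closure. -/
def evalL (P : Polynomial (Polynomial Fq)) (α : L Fq) : L Fq :=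
  Polynomial.eval₂ (φ Fq) α P

/-- Height of a polynomial over `F_q[T]`: the maximum of the absolute values of its
coefficients. -/
def Hpoly (P : Polynomial (Polynomial Fq)) : ℝ := ⨆ i : ℕ, kabs Fq (polyToK Fq (P.coeff i))

/-- `P` is the minimal polynomial of `α`: a non-constant irreducible primitive polynomial in
`(F_q[T])[X]` whose leading coefficient is monic in `T`, vanishing at `α`. -/
def IsMinPolyOf (P : Polynomial (Polynomial Fq)) (α : L Fq) : Prop :=
  0 < P.natDegree ∧ Irreducible P ∧ P.IsPrimitive ∧ (P.leadingCoeff).Monic ∧ evalL Fq P α = 0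

/-- `α` is algebraic over `F_q(T)`. -/
def IsAlgElem (α : L Fq) : Prop := ∃ P, IsMinPolyOf Fq P α

open Classical in
/-- The minimal polynomial of an algebraic element (junk value `0` otherwise). -/
def minPolyPrim (α : L Fq) : Polynomial (Polynomial Fq) :=
  if h : IsAlgElem Fq α then h.choose else 0

/-- Degree of an algebraic element. -/
def degAlg (α : L Fq) : ℕ := (minPolyPrim Fq α).natDegree

/-- Height of an algebraic element. -/
def heightAlg (α : L Fq) : ℝ := Hpoly Fq (minPolyPrim Fq α)

/-- Inseparable degree of a polynomial `P ∈ (F_q[T])[X]`: the largest power `f = p^j` of the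
characteristic such that `P(X) = R(X^f)` for some `R`. -/
def insepDeg (P : Polynomial (Polynomial Fq)) : ℕ :=
  (ringChar Fq) ^ sSup {j : ℕ | ∃ R : Polynomial (Polynomial Fq),
    P = R.comp (Polynomial.X ^ (ringChar Fq) ^ j)}

/-- Inseparable degree of an algebraic element. -/
def insepAlg (α : L Fq) : ℕ := insepDeg Fq (minPolyPrim Fq α)

/-- `α'` is the Galois conjugate of the quadratic element `α` (equal to `α` itself in the
inseparable case): the minimal polynomial of `α` factors as `A(X - α)(X - α')`. -/
def IsConjOf (α' α : L Fq) : Prop :=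
  (minPolyPrim Fq α).natDegree = 2 ∧
  (minPolyPrim Fq α).map (φ Fq) =
    Polynomial.C (φ Fq (minPolyPrim Fq α).leadingCoeff) *
      (Polynomial.X - Polynomial.C α) * (Polynomial.X - Polynomial.C α')

/-- `v` is an absolute value on the algebraic closure of `F_q((T⁻¹))` extending `kabs`
(such an extension exists and is unique). -/
structure IsAbsExt (v : L Fq → ℝ) : Prop where
  eq_zero_iff : ∀ x, v x = 0 ↔ x = 0
  map_mul : ∀ x y, v (x * y) = v x * v y
  add_le : ∀ x y, v (x + y) ≤ max (v x) (v y)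
  nonneg : ∀ x, 0 ≤ v x
  extends_kabs : ∀ f : K Fq, v (toL Fq f) = kabs Fq f

/-- The exponent `w_n(ξ)`: the supremum of the real numbers `w` such that
`0 < |P(ξ)| ≤ H(P)^{-w}` for infinitely many `P ∈ (F_q[T])[X]` of degree at most `n`. -/
def wExp (n : ℕ) (ξ : K Fq) : EReal :=
  sSup {x : EReal | ∃ w : ℝ, x = (w : EReal) ∧
    {P : Polynomial (Polynomial Fq) | P.natDegree ≤ n ∧ 0 < kabs Fq (evalK Fq P ξ) ∧
      kabs Fq (evalK Fq P ξ) ≤ Hpoly Fq P ^ (-w)}.Infinite}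

/-- The exponent `w_n^*(ξ)`: the supremum of the real numbers `w` such that
`0 < |ξ - α| ≤ H(α)^{-w-1}` for infinitely many algebraic `α` of degree at most `n`. -/
def wStarExp (v : L Fq → ℝ) (n : ℕ) (ξ : K Fq) : EReal :=
  sSup {x : EReal | ∃ w : ℝ, x = (w : EReal) ∧
    {α : L Fq | IsAlgElem Fq α ∧ degAlg Fq α ≤ n ∧ 0 < v (toL Fq ξ - α) ∧
      v (toL Fq ξ - α) ≤ heightAlg Fq α ^ (-w - 1)}.Infinite}

/-- `pSeq a n = p_{n-1}`, the numerators of the convergents of `[a 0; a 1, a 2, …]`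
(with `p_{-1} = 1`). -/
def pSeq (a : ℕ → Polynomial Fq) : ℕ → Polynomial Fq
  | 0 => 1
  | 1 => a 0
  | (n+2) => a (n+1) * pSeq a (n+1) + pSeq a n

/-- `qSeq a n = q_{n-1}`, the denominators of the convergents of `[a 0; a 1, a 2, …]`
(with `q_{-1} = 0`). -/
def qSeq (a : ℕ → Polynomial Fq) : ℕ → Polynomial Fq
  | 0 => 0
  | 1 => 1
  | (n+2) => a (n+1) * qSeq a (n+1) + qSeq a n

/-- `ξ` has continued fraction expansion `[a 0; a 1, a 2, …]`: each partial quotient `a n`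
(`n ≥ 1`) has degree at least one and `|ξ - p_n/q_n| = |q_n|⁻¹|q_{n+1}|⁻¹` for all `n ≥ 0`. -/
def IsCFOf (ξ : K Fq) (a : ℕ → Polynomial Fq) : Prop :=
  (∀ n, 1 ≤ n → 1 ≤ (a n).natDegree) ∧
  ∀ n : ℕ,
    kabs Fq (ξ - polyToK Fq (pSeq Fq a (n+1)) / polyToK Fq (qSeq Fq a (n+1))) =
      (kabs Fq (polyToK Fq (qSeq Fq a (n+1))) * kabs Fq (polyToK Fq (qSeq Fq a (n+2))))⁻¹

/-- The sequence of partial quotients of `[0; b 0, b 1, b 2, …]`. -/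
def cfA (b : ℕ → Polynomial Fq) : ℕ → Polynomial Fq := fun n => if n = 0 then 0 else b (n - 1)

/-- `qden b n` is the denominator `q_n` of the `n`-th convergent of `[0; b 0, b 1, …]`. -/
def qden (b : ℕ → Polynomial Fq) (n : ℕ) : Polynomial Fq := qSeq Fq (cfA Fq b) (n + 1)

/-- `V^w` for a finite word `V` and a real `w ≥ 0`: `⌊w⌋` copies of `V` followed by the prefix
of `V` of length `⌈(w - ⌊w⌋)|V|⌉`. -/
def wordPow {A : Type*} (V : List A) (w : ℝ) : List A :=
  (List.replicate ⌊w⌋₊ V).flatten ++ V.take ⌈(w - ⌊w⌋₊) * V.length⌉₊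

/-- The finite word `l` is a prefix of the infinite word `b`. -/
def IsPrefixOfSeq {A : Type*} (l : List A) (b : ℕ → A) : Prop :=
  ∀ (i : ℕ) (h : i < l.length), l.get ⟨i, h⟩ = b i

/-- Condition `(*)_ρ` for an infinite word. -/
def SatisfiesCond {A : Type*} (b : ℕ → A) (ρ : ℝ) : Prop :=
  ∃ (U V : ℕ → List A) (w : ℕ → ℝ),
    (∀ n, V n ≠ []) ∧ (∀ n, 0 ≤ w n) ∧
    (∀ n, IsPrefixOfSeq (U n ++ wordPow (V n) (w n)) b) ∧
    (∀ n, ρ * (((U n).length + (V n).length : ℕ) : ℝ) ≤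
      (((U n).length + (wordPow (V n) (w n)).length : ℕ) : ℝ)) ∧
    StrictMono fun n => (wordPow (V n) (w n)).length

/-- The Diophantine exponent of an infinite word: the supremum of the `ρ` such that the word
satisfies Condition `(*)_ρ`. -/
def dioExp {A : Type*} (b : ℕ → A) : EReal :=
  sSup {x : EReal | ∃ ρ : ℝ, x = (ρ : EReal) ∧ SatisfiesCond b ρ}

/-- The complexity function: the number of distinct blocks of `n` consecutive letters. -/
def complexity {A : Type*} (b : ℕ → A) (n : ℕ) : ℕ∞ :=
  {w : Fin n → A | ∃ i : ℕ, ∀ k : Fin n, w k = b (i + k)}.encard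

/-- The infinite word `b` is ultimately periodic. -/
def UltimatelyPeriodic {A : Type*} (b : ℕ → A) : Prop :=
  ∃ N T : ℕ, 0 < T ∧ ∀ n, N ≤ n → b (n + T) = b n


/-! ### Auxiliary lemmas -/

section Aux

variable {Fq}

lemma one_lt_q : (1:ℝ) < (Fintype.card Fq : ℝ) := by exact_mod_cast Fintype.one_lt_card

lemma q_pos : (0:ℝ) < (Fintype.card Fq : ℝ) := lt_trans one_pos one_lt_q

lemma kabs_zero : kabs Fq (0 : K Fq) = 0 := by simp [kabs]

lemma kabs_of_ne {f : K Fq} (hf : f ≠ 0) :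
    kabs Fq f = (Fintype.card Fq : ℝ) ^ (-f.order) := by simp [kabs, hf]

lemma kabs_nonneg (f : K Fq) : 0 ≤ kabs Fq f := by
  rcases eq_or_ne f 0 with rfl | hf
  · simp [kabs_zero]
  · rw [kabs_of_ne hf]; positivity

lemma kabs_pos {f : K Fq} (hf : f ≠ 0) : 0 < kabs Fq f := by
  rw [kabs_of_ne hf]; positivity

lemma kabs_mul (f g : K Fq) : kabs Fq (f * g) = kabs Fq f * kabs Fq g := by
  rcases eq_or_ne f 0 with rfl | hf
  · simp [kabs_zero]
  rcases eq_or_ne g 0 with rfl | hg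
  · simp [kabs_zero]
  rw [kabs_of_ne hf, kabs_of_ne hg, kabs_of_ne (mul_ne_zero hf hg),
    HahnSeries.order_mul hf hg, neg_add, zpow_add₀ (ne_of_gt q_pos)]

lemma coeff_eq_zero_of_kabs_le {f : K Fq} {t : ℝ}
    (h : kabs Fq f ≤ (Fintype.card Fq : ℝ) ^ (-t)) {m : ℤ} (hm : (m:ℝ) < t) :
    f.coeff m = 0 := by
  rcases eq_or_ne f 0 with rfl | hf
  · simp
  apply HahnSeries.coeff_eq_zero_of_lt_order
  rw [kabs_of_ne hf] at h
  have h2 : (Fintype.card Fq : ℝ) ^ ((-f.order : ℤ) : ℝ) ≤ (Fintype.card Fq : ℝ) ^ (-t) := by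
    rwa [Real.rpow_intCast]
  have h3 := (Real.rpow_le_rpow_left_iff one_lt_q).mp h2
  push_cast at h3
  have : (m:ℝ) < (f.order : ℝ) := by linarith
  exact_mod_cast this

lemma kabs_add_eq_left {x y : K Fq} (h : kabs Fq y < kabs Fq x) :
    kabs Fq (x + y) = kabs Fq x := by
  have hx : x ≠ 0 := by
    intro hx0; rw [hx0, kabs_zero] at h; exact absurd h (not_lt.mpr (kabs_nonneg y))
  rcases eq_or_ne y 0 with rfl | hy
  · rw [add_zero]
  have horder : x.order < y.order := by
    rw [kabs_of_ne hx, kabs_of_ne hy] at h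
    have := (zpow_lt_zpow_iff_right₀ one_lt_q).mp h
    omega
  have hcoeff : (x + y).coeff x.order ≠ 0 := by
    rw [HahnSeries.coeff_add, HahnSeries.coeff_eq_zero_of_lt_order horder, add_zero]
    exact HahnSeries.coeff_order_eq_zero.not.mpr hx
  have hne : x + y ≠ 0 := HahnSeries.ne_zero_of_coeff_ne_zero hcoeff
  have ho : (x + y).order = x.order := by
    apply le_antisymm (HahnSeries.order_le_of_coeff_ne_zero hcoeff)
    have := HahnSeries.min_order_le_order_add hne
    rwa [min_eq_left horder.le] at this
  rw [kabs_of_ne hne, kabs_of_ne hx, ho]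

lemma kabs_le_one_of_coeff_neg {ξ : K Fq} (h : ∀ m : ℤ, m < 0 → ξ.coeff m = 0) :
    kabs Fq ξ ≤ 1 := by
  rcases eq_or_ne ξ 0 with rfl | hξ
  · rw [kabs_zero]; norm_num
  rw [kabs_of_ne hξ]
  have horder : 0 ≤ ξ.order := by
    by_contra hlt
    exact HahnSeries.coeff_order_eq_zero.not.mpr hξ (h _ (not_le.mp hlt))
  calc (Fintype.card Fq : ℝ) ^ (-ξ.order) ≤ (Fintype.card Fq : ℝ) ^ (0:ℤ) :=
        zpow_le_zpow_right₀ one_lt_q.le (by omega)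
    _ = 1 := zpow_zero _

lemma TT_pow (i : ℕ) : (TT Fq) ^ i = HahnSeries.single (-(i:ℤ)) (1 : Fq) := by
  rw [TT, HahnSeries.single_pow]; simp

lemma polyToK_eq (B : Polynomial Fq) :
    polyToK Fq B = ∑ i ∈ Finset.range (B.natDegree + 1),
      HahnSeries.single (-(i:ℤ)) (B.coeff i) := by
  have h0 : polyToK Fq B = Polynomial.eval₂ HahnSeries.C (TT Fq) B := rfl
  rw [h0, Polynomial.eval₂_eq_sum_range]
  refine Finset.sum_congr rfl fun i _ => ?_
  rw [TT_pow, HahnSeries.C_apply, HahnSeries.single_mul_single, zero_add, mul_one]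

def coeffHom (m : ℤ) : HahnSeries ℤ Fq →+ Fq :=
  AddMonoidHom.mk' (fun f => f.coeff m) (fun _ _ => rfl)

lemma coeff_sum {s : Finset ℕ} (f : ℕ → HahnSeries ℤ Fq) (m : ℤ) :
    (∑ i ∈ s, f i).coeff m = ∑ i ∈ s, (f i).coeff m :=
  map_sum (coeffHom m) _ _

lemma polyToK_coeff_neg (B : Polynomial Fq) (n : ℕ) :
    (polyToK Fq B).coeff (-(n:ℤ)) = B.coeff n := by
  rw [polyToK_eq, coeff_sum]
  have h : ∀ i ∈ Finset.range (B.natDegree + 1),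
      (HahnSeries.single (-(i:ℤ)) (B.coeff i)).coeff (-(n:ℤ))
        = if i = n then B.coeff i else 0 := by
    intro i _
    rw [HahnSeries.coeff_single]
    by_cases hin : i = n
    · subst hin; simp
    · rw [if_neg, if_neg hin]
      intro h2
      exact hin (by exact_mod_cast neg_inj.mp h2.symm)
  rw [Finset.sum_congr rfl h, Finset.sum_ite_eq' (Finset.range (B.natDegree + 1)) n]
  split_ifs with hn
  · rfl
  · rw [eq_comm, Polynomial.coeff_eq_zero_of_natDegree_lt]
    simpa using Nat.lt_of_succ_le (not_lt.mp (by simpa [Finset.mem_range] using hn))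

lemma polyToK_coeff_pos (B : Polynomial Fq) (m : ℤ) (hm : 0 < m) :
    (polyToK Fq B).coeff m = 0 := by
  rw [polyToK_eq, coeff_sum]
  refine Finset.sum_eq_zero fun i _ => ?_
  rw [HahnSeries.coeff_single_of_ne]
  intro h
  omega

lemma polyToK_ne_zero {B : Polynomial Fq} (hB : B ≠ 0) : polyToK Fq B ≠ 0 := by
  intro h
  apply Polynomial.leadingCoeff_ne_zero.mpr hB
  have h2 := polyToK_coeff_neg B B.natDegree
  rw [h, HahnSeries.coeff_zero] at h2
  exact h2.symm

lemma polyToK_order {B : Polynomial Fq} (hB : B ≠ 0) :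
    (polyToK Fq B).order = -(B.natDegree : ℤ) := by
  apply le_antisymm
  · apply HahnSeries.order_le_of_coeff_ne_zero
    rw [polyToK_coeff_neg]
    exact Polynomial.leadingCoeff_ne_zero.mpr hB
  · by_contra h
    push_neg at h
    have h0 := HahnSeries.coeff_order_eq_zero.not.mpr (polyToK_ne_zero hB)
    set o := (polyToK Fq B).order with ho
    rcases le_or_gt o 0 with h1 | h1
    · have h2 : o = -(((-o).toNat : ℕ) : ℤ) := by omega
      rw [h2, polyToK_coeff_neg] at h0
      exact h0 (Polynomial.coeff_eq_zero_of_natDegree_lt (by omega))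
    · exact h0 (polyToK_coeff_pos B o h1)

lemma kabs_polyToK {B : Polynomial Fq} (hB : B ≠ 0) :
    kabs Fq (polyToK Fq B) = (Fintype.card Fq : ℝ) ^ (B.natDegree : ℤ) := by
  rw [kabs_of_ne (polyToK_ne_zero hB), polyToK_order hB, neg_neg]

lemma kabs_polyToK_le {A B : Polynomial Fq} (h : A.natDegree ≤ B.natDegree) (hB : B ≠ 0) :
    kabs Fq (polyToK Fq A) ≤ kabs Fq (polyToK Fq B) := by
  rcases eq_or_ne A 0 with rfl | hA
  · rw [map_zero, kabs_zero]; exact kabs_nonneg _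
  rw [kabs_polyToK hA, kabs_polyToK hB]
  exact zpow_le_zpow_right₀ one_lt_q.le (by exact_mod_cast h)

lemma polyToK_mul_coeff (B : Polynomial Fq) (ξ : K Fq) (m : ℤ) :
    (polyToK Fq B * ξ).coeff m
      = ∑ i ∈ Finset.range (B.natDegree + 1), B.coeff i * ξ.coeff (m + i) := by
  rw [polyToK_eq, Finset.sum_mul, coeff_sum]
  refine Finset.sum_congr rfl fun i _ => ?_
  have h2 := HahnSeries.coeff_single_mul_add (r := B.coeff i) (x := ξ) (b := -(i:ℤ)) (a := m + i)
  rw [show (m + i) + -(i:ℤ) = m by ring] at h2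
  exact h2

lemma evalK_deg_le_one (P : Polynomial (Polynomial Fq)) (hP : P.natDegree ≤ 1) (ξ : K Fq) :
    evalK Fq P ξ = polyToK Fq (P.coeff 0) + polyToK Fq (P.coeff 1) * ξ := by
  have h := Polynomial.eq_X_add_C_of_natDegree_le_one hP
  rw [evalK]
  nth_rewrite 1 [h]
  rw [Polynomial.eval₂_add, Polynomial.eval₂_mul, Polynomial.eval₂_C, Polynomial.eval₂_C,
    Polynomial.eval₂_X]
  ring

lemma Hpoly_eq_max (P : Polynomial (Polynomial Fq)) (hP : P.natDegree ≤ 1) :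
    Hpoly Fq P = max (kabs Fq (polyToK Fq (P.coeff 0))) (kabs Fq (polyToK Fq (P.coeff 1))) := by
  have key : ∀ i : ℕ, kabs Fq (polyToK Fq (P.coeff i))
      ≤ max (kabs Fq (polyToK Fq (P.coeff 0))) (kabs Fq (polyToK Fq (P.coeff 1))) := by
    intro i
    match i with
    | 0 => exact le_max_left _ _
    | 1 => exact le_max_right _ _
    | (n+2) =>
      have : P.coeff (n+2) = 0 := Polynomial.coeff_eq_zero_of_natDegree_lt (by omega)
      rw [this, map_zero, kabs_zero]
      exact le_trans (kabs_nonneg _) (le_max_left _ _)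
  have hbdd : BddAbove (Set.range fun i : ℕ => kabs Fq (polyToK Fq (P.coeff i))) := by
    refine ⟨max (kabs Fq (polyToK Fq (P.coeff 0))) (kabs Fq (polyToK Fq (P.coeff 1))), ?_⟩
    rintro x ⟨i, rfl⟩
    exact key i
  apply le_antisymm
  · exact ciSup_le key
  · exact max_le (le_ciSup hbdd 0) (le_ciSup hbdd 1)

end Aux


section Words

variable {A : Type*}

lemma wordPow_natCast (V : List A) (q : ℕ) : wordPow V (q:ℝ) = (List.replicate q V).flatten := by
  rw [wordPow, Nat.floor_natCast, sub_self, zero_mul, Nat.ceil_zero, List.take_zero,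
    List.append_nil]

lemma length_flatten_replicate (V : List A) (q : ℕ) :
    ((List.replicate q V).flatten).length = q * V.length := by
  induction q with
  | zero => simp
  | succ n ih => rw [List.replicate_succ, List.flatten_cons, List.length_append, ih]; ring

lemma getElem_flatten_replicate (V : List A) (hV : 0 < V.length) (q k : ℕ)
    (hk : k < ((List.replicate q V).flatten).length) :
    ((List.replicate q V).flatten)[k] = V[k % V.length]'(Nat.mod_lt _ hV) := by
  induction q generalizing k with
  | zero => rw [length_flatten_replicate] at hk; omega
  | succ n ih =>
    simp only [List.replicate_succ, List.flatten_cons] at hk ⊢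
    by_cases h : k < V.length
    · rw [List.getElem_append_left h]
      congr 1
      exact (Nat.mod_eq_of_lt h).symm
    · push_neg at h
      rw [List.getElem_append_right (by omega)]
      rw [ih (k - V.length) (by rw [List.length_append] at hk; omega)]
      congr 1
      rw [Nat.mod_eq_sub_mod h]

lemma periodic_mod (b : ℕ → A) (i s N : ℕ) (hs : 0 < s)
    (hper : ∀ n, i ≤ n → n + s < N → b (n + s) = b n) :
    ∀ k, i ≤ k → k < N → b k = b (i + (k - i) % s) := by
  intro k
  induction k using Nat.strong_induction_on with
  | _ k ih =>
    intro hik hkN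
    by_cases h : k < i + s
    · rw [Nat.mod_eq_of_lt (by omega), Nat.add_sub_cancel' hik]
    · push_neg at h
      have h1 : b ((k - s) + s) = b (k - s) := hper (k - s) (by omega) (by omega)
      rw [show (k - s) + s = k by omega] at h1
      rw [h1, ih (k - s) (by omega) (by omega) (by omega)]
      congr 2
      rw [show k - s - i = (k - i) - s by omega, ← Nat.mod_eq_sub_mod (by omega)]

lemma periodic_prefix (b : ℕ → A) (i s N : ℕ) (hs : 0 < s)
    (hper : ∀ n, i ≤ n → n + s < N → b (n + s) = b n) :
    IsPrefixOfSeq ((List.ofFn fun t : Fin i => b t) ++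
      wordPow (List.ofFn fun t : Fin s => b (i + t)) (((N - i) / s : ℕ) : ℝ)) b := by
  set V : List A := List.ofFn fun t : Fin s => b (i + t) with hV
  have hVlen : V.length = s := by simp [hV]
  rw [wordPow_natCast]
  intro k hk
  rw [List.length_append, List.length_ofFn, length_flatten_replicate, hVlen] at hk
  rw [List.get_eq_getElem]
  by_cases h : k < i
  · rw [List.getElem_append_left (by simpa using h)]
    simp
  · push_neg at h
    have hkN : k < N := by
      have := Nat.div_mul_le_self (N - i) s
      omega
    rw [List.getElem_append_right (by simpa using h)]
    have h2 := getElem_flatten_replicate V (by omega) ((N - i) / s)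
      (k - (List.ofFn fun t : Fin i => b t).length)
      (by rw [length_flatten_replicate, hVlen]; simp only [List.length_ofFn]; omega)
    rw [h2]
    simp only [List.length_ofFn, hVlen, hV, List.getElem_ofFn]
    exact (periodic_mod b i s N hs hper k h hkN).symm

end Words

section Propagate

variable {Fq}

lemma propagate (c : ℕ → Fq) (bcoef : ℕ → Fq) (d : ℕ) (hd : 0 < d) (hbd : bcoef d ≠ 0) (M : ℝ)
    (hrec : ∀ m : ℕ, 1 ≤ m → (m:ℝ) < M →
      ∑ r ∈ Finset.range (d+1), bcoef r * c (m+r) = 0)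
    (i j : ℕ) (h1i : 1 ≤ i) (hij : i < j)
    (hwin : ∀ t, t < d → c (i+t) = c (j+t)) :
    ∀ t : ℕ, ((j + t : ℕ):ℝ) < M + d → c (i+t) = c (j+t) := by
  intro t
  induction t using Nat.strong_induction_on with
  | _ t ih =>
    intro hbound
    by_cases ht : t < d
    · exact hwin t ht
    · push_neg at ht
      obtain ⟨t₀, rfl⟩ : ∃ t₀, t = d + t₀ := ⟨t - d, by omega⟩
      have hm1 : ∀ m : ℕ, 1 ≤ m → (m:ℝ) < M →
          bcoef d * c (m + d) = - ∑ r ∈ Finset.range d, bcoef r * c (m+r) := by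
        intro m hm hmM
        have h0 := hrec m hm hmM
        rw [Finset.sum_range_succ] at h0
        exact eq_neg_of_add_eq_zero_right h0
      have hijr : (i:ℝ) < (j:ℝ) := by exact_mod_cast hij
      have hbr : (j:ℝ) + d + t₀ < M + d := by push_cast at hbound; linarith
      have hj' : ((j + t₀ : ℕ) : ℝ) < M := by push_cast; linarith
      have hi' : ((i + t₀ : ℕ) : ℝ) < M := by push_cast; linarith
      have e1 := hm1 (i + t₀) (by omega) hi'
      have e2 := hm1 (j + t₀) (by omega) hj'
      have hsums : ∑ r ∈ Finset.range d, bcoef r * c ((i + t₀)+r)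
          = ∑ r ∈ Finset.range d, bcoef r * c ((j + t₀)+r) := by
        refine Finset.sum_congr rfl fun r hr => ?_
        rw [Finset.mem_range] at hr
        have hrr : (r:ℝ) < d := by exact_mod_cast hr
        have := ih (t₀ + r) (by omega) (by push_cast; linarith)
        rw [show i + (t₀ + r) = i + t₀ + r from by omega,
          show j + (t₀ + r) = j + t₀ + r from by omega] at this
        rw [this]
      have : bcoef d * c ((i + t₀) + d) = bcoef d * c ((j + t₀) + d) := by
        rw [e1, e2, hsums]
      have h3 := mul_left_cancel₀ hbd this
      rw [show i + (d + t₀) = i + t₀ + d from by omega,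
        show j + (d + t₀) = j + t₀ + d from by omega]
      exact h3

end Propagate


section Pigeon

variable {Fq}

lemma exists_equal_windows (a : ℕ → Fq) (d κ : ℕ) (hd : 0 < d)
    (hcomp : complexity a d ≤ ((κ * d : ℕ) : ℕ∞)) :
    ∃ i j : ℕ, 1 ≤ i ∧ i < j ∧ j ≤ κ * d + 1 ∧ ∀ t, t < d → a (i + t) = a (j + t) := by
  classical
  set F : Set (Fin d → Fq) := {w : Fin d → Fq | ∃ i : ℕ, ∀ k : Fin d, w k = a (i + k)} with hF
  have hFfin : F.Finite := Set.toFinite F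
  have hcard : hFfin.toFinset.card ≤ κ * d := by
    have h1 : F.encard = (hFfin.toFinset.card : ℕ∞) := hFfin.encard_eq_coe_toFinset_card
    rw [complexity] at hcomp
    rw [← hF] at hcomp
    rw [h1] at hcomp
    exact_mod_cast hcomp
  have hmaps : ∀ m ∈ Finset.Icc 1 (κ * d + 1),
      (fun k : Fin d => a (m + k)) ∈ hFfin.toFinset := by
    intro m _
    rw [Set.Finite.mem_toFinset]
    exact ⟨m, fun k => rfl⟩
  have hlt : hFfin.toFinset.card < (Finset.Icc 1 (κ * d + 1)).card := by
    rw [Nat.card_Icc]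
    omega
  obtain ⟨i, hi, j, hj, hne, heq⟩ :=
    Finset.exists_ne_map_eq_of_card_lt_of_maps_to hlt hmaps
  rw [Finset.mem_Icc] at hi hj
  rcases lt_or_gt_of_ne hne with h | h
  · exact ⟨i, j, hi.1, h, hj.2, fun t ht => by
      have := congrFun heq ⟨t, ht⟩; simpa using this⟩
  · exact ⟨j, i, hj.1, h, hi.2, fun t ht => by
      have := congrFun heq ⟨t, ht⟩; simpa using this.symm⟩

lemma finite_bounded_polys (D : ℕ) :
    {P : Polynomial (Polynomial Fq) | P.natDegree ≤ 1 ∧ (P.coeff 0).natDegree ≤ D ∧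
      (P.coeff 1).natDegree ≤ D}.Finite := by
  classical
  set g : Polynomial (Polynomial Fq) → ((Fin (D+1) → Fq) × (Fin (D+1) → Fq)) :=
    fun P => (fun k => (P.coeff 0).coeff k, fun k => (P.coeff 1).coeff k) with hg
  apply Set.Finite.of_finite_image (f := g) (Set.toFinite _)
  rintro P ⟨hP1, hP0d, hP1d⟩ Q ⟨hQ1, hQ0d, hQ1d⟩ heq
  simp only [hg, Prod.mk.injEq] at heq
  have hc0 : P.coeff 0 = Q.coeff 0 := by
    apply Polynomial.ext
    intro n
    by_cases hn : n ≤ D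
    · exact congrFun heq.1 ⟨n, by omega⟩
    · rw [Polynomial.coeff_eq_zero_of_natDegree_lt (by omega),
        Polynomial.coeff_eq_zero_of_natDegree_lt (by omega)]
  have hc1 : P.coeff 1 = Q.coeff 1 := by
    apply Polynomial.ext
    intro n
    by_cases hn : n ≤ D
    · exact congrFun heq.2 ⟨n, by omega⟩
    · rw [Polynomial.coeff_eq_zero_of_natDegree_lt (by omega),
        Polynomial.coeff_eq_zero_of_natDegree_lt (by omega)]
  rw [Polynomial.eq_X_add_C_of_natDegree_le_one hP1,
    Polynomial.eq_X_add_C_of_natDegree_le_one hQ1, hc0, hc1]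

end Pigeon


section Dio

variable {A : Type*}

lemma wordPow_one (V : List A) : wordPow V (1:ℝ) = V := by
  have := wordPow_natCast V 1
  simpa using this

lemma satisfiesCond_one (b : ℕ → A) : SatisfiesCond b 1 := by
  refine ⟨fun _ => [], fun n => List.ofFn (fun t : Fin (n+1) => b t), fun _ => 1,
    fun n => ?_, fun n => zero_le_one, fun n => ?_, fun n => ?_, ?_⟩
  · simp [← List.length_pos_iff]
  · rw [wordPow_one]
    intro i h
    simp only [List.nil_append] at h ⊢
    rw [List.get_eq_getElem, List.getElem_ofFn]
  · simp [wordPow_one]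
  · intro m n hmn
    show (wordPow (List.ofFn fun t : Fin (m+1) => b t) 1).length
      < (wordPow (List.ofFn fun t : Fin (n+1) => b t) 1).length
    simp only [wordPow_one, List.length_ofFn]
    omega

lemma le_dioExp (b : ℕ → A) (ρ : ℝ) (h : SatisfiesCond b ρ) : (ρ : EReal) ≤ dioExp b :=
  le_sSup ⟨ρ, rfl, h⟩

lemma satisfiesCond_of_infinite_good (b : ℕ → A) (ρ : ℝ)
    (h : {m : ℕ | ∃ (U V : List A) (w' : ℝ), V ≠ [] ∧ 0 ≤ w' ∧
      IsPrefixOfSeq (U ++ wordPow V w') b ∧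
      ρ * ((U.length + V.length : ℕ) : ℝ) ≤ ((U.length + (wordPow V w').length : ℕ) : ℝ) ∧
      (wordPow V w').length = m}.Infinite) :
    SatisfiesCond b ρ := by
  classical
  set p : ℕ → Prop := fun m => ∃ (U V : List A) (w' : ℝ), V ≠ [] ∧ 0 ≤ w' ∧
      IsPrefixOfSeq (U ++ wordPow V w') b ∧
      ρ * ((U.length + V.length : ℕ) : ℝ) ≤ ((U.length + (wordPow V w').length : ℕ) : ℝ) ∧
      (wordPow V w').length = m with hp
  have hinf : (setOf p).Infinite := h
  have hmem : ∀ n : ℕ, p (Nat.nth p n) := fun n => Nat.nth_mem_of_infinite hinf n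
  choose U V w' hV hw hpre hratio hlen using hmem
  refine ⟨U, V, w', hV, hw, hpre, fun n => hratio n, ?_⟩
  intro m n hmn
  show (wordPow (V m) (w' m)).length < (wordPow (V n) (w' n)).length
  rw [hlen m, hlen n]
  exact Nat.nth_strictMono hinf hmn

end Dio


section MainStep

variable {Fq}

lemma kabs_coeff0_le {ξ : K Fq} (hξ : kabs Fq ξ ≤ 1) {w : ℝ} (hw : 0 < w)
    {P : Polynomial (Polynomial Fq)} (h1 : P.natDegree ≤ 1)
    (hle : kabs Fq (evalK Fq P ξ) ≤ Hpoly Fq P ^ (-w)) :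
    kabs Fq (polyToK Fq (P.coeff 0)) ≤ max (kabs Fq (polyToK Fq (P.coeff 1))) 1 := by
  by_contra hlt
  push_neg at hlt
  have hA1 : 1 < kabs Fq (polyToK Fq (P.coeff 0)) :=
    lt_of_le_of_lt (le_max_right _ 1) hlt
  have hBx : kabs Fq (polyToK Fq (P.coeff 1) * ξ) < kabs Fq (polyToK Fq (P.coeff 0)) := by
    rw [kabs_mul]
    calc kabs Fq (polyToK Fq (P.coeff 1)) * kabs Fq ξ
        ≤ kabs Fq (polyToK Fq (P.coeff 1)) * 1 :=
          mul_le_mul_of_nonneg_left hξ (kabs_nonneg _)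
      _ = kabs Fq (polyToK Fq (P.coeff 1)) := mul_one _
      _ ≤ max (kabs Fq (polyToK Fq (P.coeff 1))) 1 := le_max_left _ _
      _ < _ := hlt
  have heval : kabs Fq (evalK Fq P ξ) = kabs Fq (polyToK Fq (P.coeff 0)) := by
    rw [evalK_deg_le_one P h1 ξ]
    exact kabs_add_eq_left hBx
  have hH : Hpoly Fq P = kabs Fq (polyToK Fq (P.coeff 0)) := by
    rw [Hpoly_eq_max P h1]
    exact max_eq_left (le_of_lt (lt_of_le_of_lt (le_max_left _ 1) hlt))
  rw [heval, hH] at hle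
  have : Hpoly Fq P ^ (-w) < 1 := by
    rw [hH]
    exact Real.rpow_lt_one_of_one_lt_of_neg hA1 (by linarith)
  rw [hH] at this
  linarith

lemma coeff0_natDegree_le {ξ : K Fq} (hξ : kabs Fq ξ ≤ 1) {w : ℝ} (hw : 0 < w)
    {P : Polynomial (Polynomial Fq)} (h1 : P.natDegree ≤ 1)
    (hle : kabs Fq (evalK Fq P ξ) ≤ Hpoly Fq P ^ (-w)) :
    (P.coeff 0).natDegree ≤ (P.coeff 1).natDegree := by
  rcases eq_or_ne (P.coeff 0) 0 with hA | hA
  · rw [hA]; simp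
  have key := kabs_coeff0_le hξ hw h1 hle
  rw [kabs_polyToK hA] at key
  rcases eq_or_ne (P.coeff 1) 0 with hB | hB
  · rw [hB, map_zero, kabs_zero, max_eq_right (by norm_num : (0:ℝ) ≤ 1)] at key
    have : (P.coeff 0).natDegree ≤ 0 := by
      by_contra hgt
      push_neg at hgt
      have : (Fintype.card Fq : ℝ) ^ ((0:ℤ)) < (Fintype.card Fq : ℝ) ^ ((P.coeff 0).natDegree : ℤ) :=
        zpow_lt_zpow_right₀ one_lt_q (by exact_mod_cast hgt)
      rw [zpow_zero] at this
      linarith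
    omega
  · rw [kabs_polyToK hB] at key
    have h1B : (1:ℝ) ≤ (Fintype.card Fq : ℝ) ^ ((P.coeff 1).natDegree : ℤ) := by
      calc (1:ℝ) = (Fintype.card Fq : ℝ) ^ ((0:ℤ)) := (zpow_zero _).symm
        _ ≤ _ := zpow_le_zpow_right₀ one_lt_q.le (by positivity)
    rw [max_eq_left h1B] at key
    have := (zpow_le_zpow_iff_right₀ one_lt_q).mp key
    exact_mod_cast this

end MainStep


section KeyStep

variable {Fq}

set_option maxHeartbeats 1000000 in
lemma key_good (a : ℕ → Fq) (ξ : K Fq) (hξcoeff : ∀ n : ℕ, ξ.coeff (n : ℤ) = a n)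
    (κ : ℕ) (hκ : 2 ≤ κ) (d : ℕ) (hd1 : 1 ≤ d)
    (hcompd : complexity a d ≤ ((κ * d : ℕ) : ℕ∞))
    (w : ℝ) (hw : (κ:ℝ) + 2 ≤ w) (hw4 : 4*((κ:ℝ)+1) ≤ w + 1)
    (P : Polynomial (Polynomial Fq)) (hP1 : P.natDegree ≤ 1)
    (hd : (P.coeff 1).natDegree = d) (hAle : (P.coeff 0).natDegree ≤ d)
    (hle : kabs Fq (evalK Fq P ξ) ≤ Hpoly Fq P ^ (-w)) :
    ∃ (U V : List Fq) (w' : ℝ), V ≠ [] ∧ 0 ≤ w' ∧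
      IsPrefixOfSeq (U ++ wordPow V w') a ∧
      ((w+1)/(4*(κ:ℝ))) * ((U.length + V.length : ℕ) : ℝ)
        ≤ ((U.length + (wordPow V w').length : ℕ) : ℝ) ∧
      (d:ℝ) ≤ ((wordPow V w').length : ℝ) := by
  have hκr : (2:ℝ) ≤ (κ:ℝ) := by exact_mod_cast hκ
  have hd1r : (1:ℝ) ≤ (d:ℝ) := by exact_mod_cast hd1
  have hw0 : (0:ℝ) ≤ w := by linarith
  have hwd0 : (0:ℝ) ≤ w * d := by positivity
  have hκd2 : (2:ℝ) ≤ (κ:ℝ) * d := by nlinarith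
  set B := P.coeff 1 with hB
  have hB0 : B ≠ 0 := by
    intro h
    rw [h, Polynomial.natDegree_zero] at hd
    omega
  have hH : Hpoly Fq P = (Fintype.card Fq : ℝ) ^ (d:ℤ) := by
    rw [Hpoly_eq_max P hP1, max_eq_right (kabs_polyToK_le (by rw [← hd] at hAle; exact hAle) hB0),
      kabs_polyToK hB0, hd]
  have hsmall : kabs Fq (evalK Fq P ξ) ≤ (Fintype.card Fq : ℝ) ^ (-(w * d)) := by
    have e1 : Hpoly Fq P ^ (-w) = ((Fintype.card Fq : ℝ) ^ ((d:ℕ) : ℝ)) ^ (-w) := by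
      rw [hH, Real.rpow_natCast, zpow_natCast]
    have e2 : ((Fintype.card Fq : ℝ) ^ ((d:ℕ) : ℝ)) ^ (-w)
        = (Fintype.card Fq : ℝ) ^ (((d:ℕ) : ℝ) * (-w)) := (Real.rpow_mul q_pos.le _ _).symm
    rw [e1, e2, show ((d:ℕ):ℝ) * (-w) = -(w * d) by push_cast; ring] at hle
    exact hle
  have hrec : ∀ m : ℕ, 1 ≤ m → (m:ℝ) < w * d →
      ∑ r ∈ Finset.range (d+1), B.coeff r * a (m+r) = 0 := by
    intro m hm hmwd
    have h0 : (evalK Fq P ξ).coeff (m:ℤ) = 0 :=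
      coeff_eq_zero_of_kabs_le hsmall (by exact_mod_cast hmwd)
    rw [evalK_deg_le_one P hP1 ξ, HahnSeries.coeff_add,
      polyToK_coeff_pos _ _ (by exact_mod_cast hm), zero_add, polyToK_mul_coeff, ← hB, hd] at h0
    rw [← h0]
    refine Finset.sum_congr rfl fun r _ => ?_
    rw [show ((m:ℤ) + (r:ℤ)) = ((m + r : ℕ) : ℤ) by push_cast; ring, hξcoeff]
  obtain ⟨i, j, h1i, hij, hjub, hwin⟩ := exists_equal_windows a d κ (by omega) hcompd
  have hbd : B.coeff d ≠ 0 := by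
    rw [← hd, ← Polynomial.leadingCoeff]
    exact Polynomial.leadingCoeff_ne_zero.mpr hB0
  have hprop := propagate a B.coeff d (by omega) hbd (w * d) hrec i j h1i hij hwin
  set s := j - i with hsdef
  have hs0 : 0 < s := by omega
  set N := ⌊w * d⌋₊ + d with hNdef
  have hNlb : w * d + d - 1 < (N:ℝ) := by
    rw [hNdef]
    push_cast
    have := Nat.sub_one_lt_floor (w * d)
    linarith
  have hNub : (N:ℝ) ≤ w * d + d := by
    rw [hNdef]
    push_cast
    have := Nat.floor_le hwd0
    linarith
  -- casts for i, j, s, d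
  have hir : (1:ℝ) ≤ (i:ℝ) := by exact_mod_cast h1i
  have hiub : (i:ℝ) ≤ (κ:ℝ) * d + 1 := by
    have : (j:ℝ) ≤ (κ:ℝ) * d + 1 := by exact_mod_cast hjub
    have hijr : (i:ℝ) < (j:ℝ) := by exact_mod_cast hij
    linarith
  have hsub : (s:ℝ) ≤ (κ:ℝ) * d := by
    have h1 : ((s:ℕ):ℝ) = (j:ℝ) - i := by
      rw [hsdef]; push_cast [Nat.cast_sub (le_of_lt hij)]; ring
    have h2 : (j:ℝ) ≤ (κ:ℝ) * d + 1 := by exact_mod_cast hjub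
    linarith
  have hsr : (1:ℝ) ≤ (s:ℝ) := by exact_mod_cast hs0
  have hiN : i ≤ N := by
    have : (i:ℝ) < (N:ℝ) := by nlinarith
    exact_mod_cast this.le
  have hper : ∀ n, i ≤ n → n + s < N → a (n + s) = a n := by
    intro n hin hnN
    have hcond : ((j + (n - i) : ℕ):ℝ) < w * d + d := by
      have he : j + (n - i) = n + s := by omega
      rw [he]
      have h1 : ((n + s : ℕ):ℝ) < (N:ℝ) := by exact_mod_cast hnN
      linarith
    have ht := hprop (n - i) hcond
    rw [show i + (n - i) = n by omega, show j + (n - i) = n + s by omega] at ht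
    exact ht.symm
  have hpre := periodic_prefix a i s N hs0 hper
  set q' := (N - i) / s with hq'def
  have hWlen : (wordPow (List.ofFn fun t : Fin s => a (i + t)) ((q':ℕ):ℝ)).length
      = q' * s := by
    rw [wordPow_natCast, length_flatten_replicate, List.length_ofFn]
  have hmod := Nat.div_add_mod (N - i) s
  rw [Nat.mul_comm] at hmod
  have hmodlt := Nat.mod_lt (N - i) hs0
  have hcastNi : ((N - i : ℕ):ℝ) = (N:ℝ) - i := by push_cast [Nat.cast_sub hiN]; ring
  have hq's : (N:ℝ) - i < (q' * s : ℕ) + s := by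
    have hnat : N - i < q' * s + s := by
      rw [← hmod]
      exact Nat.add_lt_add_left hmodlt _
    have h2 : ((N - i : ℕ):ℝ) < ((q' * s + s : ℕ):ℝ) := by exact_mod_cast hnat
    rw [hcastNi] at h2
    push_cast at h2 ⊢
    linarith
  have hX : w * d + d - 1 - (i:ℝ) - s ≤ ((q' * s : ℕ):ℝ) := by
    push_cast at hq's ⊢
    linarith
  have hprod : 4*((κ:ℝ) * d + d) ≤ w * d + d := by
    have := mul_le_mul_of_nonneg_right hw4 (le_trans zero_le_one hd1r)
    nlinarith
  refine ⟨List.ofFn fun t : Fin i => a t, List.ofFn fun t : Fin s => a (i + t), ((q':ℕ):ℝ),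
    ?_, by positivity, hpre, ?_, ?_⟩
  · simp only [ne_eq, ← List.length_eq_zero_iff, List.length_ofFn]
    omega
  · -- ratio goal
    simp only [List.length_ofFn, hWlen]
    have h3 : (i:ℝ) + s ≤ 3 * ((κ:ℝ) * d) := by linarith
    have hρpos : 0 ≤ (w+1)/(4*(κ:ℝ)) := by positivity
    have hmul : (w+1)/(4*(κ:ℝ)) * (3 * ((κ:ℝ) * d)) = 3*(w+1)*(d:ℝ)/4 := by
      field_simp
    have hstep : (w+1)/(4*(κ:ℝ)) * ((i:ℝ) + s) ≤ 3*(w+1)*(d:ℝ)/4 := by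
      calc (w+1)/(4*(κ:ℝ)) * ((i:ℝ) + s) ≤ (w+1)/(4*(κ:ℝ)) * (3 * ((κ:ℝ) * d)) :=
            mul_le_mul_of_nonneg_left h3 hρpos
        _ = _ := hmul
    have hfinal : 3*(w+1)*(d:ℝ)/4 ≤ (i:ℝ) + ((q' * s : ℕ):ℝ) := by
      push_cast at hX ⊢
      linarith
    push_cast at hstep hfinal ⊢
    linarith [hstep, hfinal]
  · -- length lower bound
    rw [hWlen]
    push_cast at hX ⊢
    linarith

end KeyStep


section Final

variable {Fq}

lemma exists_large_deg (ξ : K Fq) (hξ1 : kabs Fq ξ ≤ 1) (w : ℝ) (hw : 0 < w)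
    (hinf : {P : Polynomial (Polynomial Fq) | P.natDegree ≤ 1 ∧ 0 < kabs Fq (evalK Fq P ξ) ∧
      kabs Fq (evalK Fq P ξ) ≤ Hpoly Fq P ^ (-w)}.Infinite) (D : ℕ) :
    ∃ P : Polynomial (Polynomial Fq), P.natDegree ≤ 1 ∧
      kabs Fq (evalK Fq P ξ) ≤ Hpoly Fq P ^ (-w) ∧
      (P.coeff 0).natDegree ≤ (P.coeff 1).natDegree ∧ D < (P.coeff 1).natDegree := by
  by_contra h
  push_neg at h
  apply hinf
  refine Set.Finite.subset (finite_bounded_polys D) ?_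
  rintro P ⟨hP1, _, hle⟩
  have hdeg := coeff0_natDegree_le hξ1 hw hP1 hle
  have hBD : (P.coeff 1).natDegree ≤ D := h P hP1 hle hdeg
  exact ⟨hP1, le_trans hdeg hBD, hBD⟩

end Final


theorem stmt19 (Fq : Type) [Field Fq] [Fintype Fq]
    (a : ℕ → Fq) (hnup : ¬ UltimatelyPeriodic a)
    (ξ : K Fq) (hξcoeff : ∀ n : ℕ, ξ.coeff (n : ℤ) = a n)
    (hξneg : ∀ m : ℤ, m < 0 → ξ.coeff m = 0)
    (κ n₀ : ℕ) (hκ : 2 ≤ κ) (hn₀ : 1 ≤ n₀)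
    (hcomp : ∀ n : ℕ, n₀ ≤ n → complexity a n ≤ ((κ * n : ℕ) : ℕ∞))
    (hdio : dioExp a ≠ ⊤) :
    wExp Fq 1 ξ ≤ ((8 * (κ + 1 : ℝ) ^ 2 * (2 * κ + 1) : ℝ) : EReal) * dioExp a - 1 := by
  have hξ1 : kabs Fq ξ ≤ 1 := kabs_le_one_of_coeff_neg hξneg
  have hκr : (2:ℝ) ≤ (κ:ℝ) := by exact_mod_cast hκ
  set C : ℝ := 8 * ((κ:ℝ) + 1) ^ 2 * (2 * (κ:ℝ) + 1) with hCdef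
  have hC1 : 4 * ((κ:ℝ) + 1) ≤ C := by rw [hCdef]; nlinarith
  have hC2 : (κ:ℝ) + 3 ≤ C := by rw [hCdef]; nlinarith
  have hC3 : 4 * (κ:ℝ) ≤ C := by linarith
  have hC0 : 1 ≤ C := by linarith
  have hdio1 : ((1:ℝ) : EReal) ≤ dioExp a := le_dioExp a 1 (satisfiesCond_one a)
  have hbot : dioExp a ≠ ⊥ := by
    intro hb
    rw [hb] at hdio1
    exact (EReal.bot_lt_coe 1).not_ge hdio1
  set r : ℝ := (dioExp a).toReal with hrdef
  have hr : dioExp a = (r : EReal) := (EReal.coe_toReal hdio hbot).symm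
  have hr1 : (1:ℝ) ≤ r := by
    rw [hr] at hdio1
    exact_mod_cast hdio1
  have hRHS : ((8 * (κ + 1 : ℝ) ^ 2 * (2 * κ + 1) : ℝ) : EReal) * dioExp a - 1
      = ((C * r - 1 : ℝ) : EReal) := by
    rw [hr, hCdef, ← EReal.coe_mul, ← EReal.coe_one, ← EReal.coe_sub]
  rw [hRHS]
  refine sSup_le ?_
  rintro x ⟨w, rfl, hinf⟩
  rw [EReal.coe_le_coe_iff]
  by_cases hcase : w + 1 ≤ C
  · nlinarith
  · push_neg at hcase
    have hw0 : (0:ℝ) < w := by linarith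
    have hsat : SatisfiesCond a ((w + 1) / (4 * (κ:ℝ))) := by
      apply satisfiesCond_of_infinite_good
      apply Set.infinite_of_not_bddAbove
      rw [not_bddAbove_iff]
      intro M
      obtain ⟨P, hP1, hle, hdeg, hDlt⟩ := exists_large_deg ξ hξ1 w hw0 hinf (max n₀ (M + 1))
      obtain ⟨U, V, w', hV, hw', hpre, hratio, hlen⟩ :=
        key_good a ξ hξcoeff κ hκ (P.coeff 1).natDegree (by omega)
          (hcomp _ (by omega)) w (by linarith) (by linarith) P hP1 rfl hdeg hle
      refine ⟨(wordPow V w').length, ⟨U, V, w', hV, hw', hpre, hratio, rfl⟩, ?_⟩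
      have hdM : (M + 1 : ℝ) ≤ ((P.coeff 1).natDegree : ℝ) := by
        exact_mod_cast le_trans (le_max_right n₀ (M + 1)) hDlt.le
      have hMlt : (M:ℝ) < ((wordPow V w').length : ℝ) := by linarith
      exact_mod_cast hMlt
    have hdge := le_dioExp a _ hsat
    rw [hr] at hdge
    have hρr : (w + 1) / (4 * (κ:ℝ)) ≤ r := by exact_mod_cast hdge
    have hκpos : (0:ℝ) < 4 * (κ:ℝ) := by linarith
    have hfs : 4 * (κ:ℝ) * ((w + 1) / (4 * (κ:ℝ))) = w + 1 := by field_simp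
    have hρ0 : 0 ≤ (w + 1) / (4 * (κ:ℝ)) := by positivity
    nlinarith [mul_le_mul_of_nonneg_left hρr (le_trans (by norm_num : (0:ℝ) ≤ 1) hC0),
      mul_le_mul_of_nonneg_right (le_trans hC3 (le_of_eq rfl)) hρ0]

end Ooto
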